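/- Let $H$ be an $n \times d$ random matrix on a probability space $(\Omega, \mathcal{F}, \mathbb{P})$ such that $M = \mathbb{E}(HH^T)$ is invertible. Then for any $b \in \mathbb{R}^n$, the minimum of $\mathbb{E}\|Y\|^2$ over all square-integrable $\mathbb{R}^d$-valued random variables $Y$ with $\mathbb{E}(HY) = b$ equals $b^T M^{-1} b$, and the minimum is attained at $Y = H^T M^{-1} b$. -/

import Mathlib

open MeasureTheory Matrix

lemma stmt1_l2mul {Ω : Type*} [MeasureSpace Ω] {f g : Ω → ℝ} (hf : MemLp f 2 volume)
    (hg : MemLp g 2 volume) : Integrable (fun ω => f ω * g ω) volume := by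
  have := memLp_one_iff_integrable.mp
    (MemLp.smul (r := 1) hg hf)
  exact this

/-- Quadratic minimization: if `M = 𝔼(HHᵀ)` is invertible, then the minimum of `𝔼‖Y‖²`
over square-integrable `Y : Ω → ℝ^d` with `𝔼(HY) = b` equals `bᵀM⁻¹b`, and the minimum
is attained at `Y = Hᵀ M⁻¹ b`. -/
theorem stmt_1 {Ω : Type*} [MeasureSpace Ω] [IsProbabilityMeasure (volume : Measure Ω)]
    {n d : ℕ} (H : Ω → Matrix (Fin n) (Fin d) ℝ)
    (hH : ∀ i j, MemLp (fun ω => H ω i j) 2 volume)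
    (M : Matrix (Fin n) (Fin n) ℝ)
    (hM : ∀ i j, M i j = ∫ ω, (H ω * (H ω)ᵀ) i j)
    (hMinv : IsUnit M.det) (b : Fin n → ℝ) :
    IsLeast {E : ℝ | ∃ Y : Ω → Fin d → ℝ,
        (∀ j, MemLp (fun ω => Y ω j) 2 volume) ∧
        (∀ i, (∫ ω, (H ω *ᵥ Y ω) i) = b i) ∧
        E = ∫ ω, ∑ j, (Y ω j) ^ 2}
      (b ⬝ᵥ M⁻¹ *ᵥ b) ∧
    (∀ i, (∫ ω, (H ω *ᵥ ((H ω)ᵀ *ᵥ (M⁻¹ *ᵥ b))) i) = b i) ∧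
    (∫ ω, ∑ j, (((H ω)ᵀ *ᵥ (M⁻¹ *ᵥ b)) j) ^ 2) = b ⬝ᵥ M⁻¹ *ᵥ b := by
  classical
  set c : Fin n → ℝ := M⁻¹ *ᵥ b with hc
  set Ys : Ω → Fin d → ℝ := fun ω => (H ω)ᵀ *ᵥ c with hYsdef
  have hYsj : ∀ ω j, Ys ω j = ∑ i, H ω i j * c i := by
    intro ω j; simp [hYsdef, mulVec, dotProduct, mul_comm]
  -- square-integrability of Ys components
  have hYs : ∀ j, MemLp (fun ω => Ys ω j) 2 volume := by
    intro j
    have : (fun ω => Ys ω j) = fun ω => ∑ i, H ω i j * c i := by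
      ext ω; exact hYsj ω j
    rw [this]
    exact memLp_finset_sum _ (fun i _ => by
      simpa [mul_comm] using (hH i j).const_mul (c i))
  -- integrability of various products
  have hHHint : ∀ i j k, Integrable (fun ω => H ω i j * H ω k j) volume :=
    fun i j k => stmt1_l2mul (hH i j) (hH k j)
  -- entries of M as sums of integrals
  have hMentry : ∀ i k, M i k = ∑ j, ∫ ω, H ω i j * H ω k j := by
    intro i k
    rw [hM i k, ← integral_finset_sum _ (fun j _ => hHHint i j k)]
    refine integral_congr_ae (Filter.Eventually.of_forall fun ω => ?_)
    simp [Matrix.mul_apply]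
  -- feasibility of Ys
  have hfeas : ∀ i, (∫ ω, (H ω *ᵥ Ys ω) i) = b i := by
    intro i
    have hrep : ∀ ω, (H ω *ᵥ Ys ω) i = ∑ k, c k * ∑ j, H ω i j * H ω k j := by
      intro ω
      simp only [mulVec, dotProduct, hYsj, Finset.mul_sum, Finset.sum_mul]
      rw [Finset.sum_comm]
      exact Finset.sum_congr rfl fun k _ => Finset.sum_congr rfl fun j _ => by ring
    calc (∫ ω, (H ω *ᵥ Ys ω) i)
        = ∫ ω, ∑ k, c k * ∑ j, H ω i j * H ω k j := by simp_rw [hrep]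
      _ = ∑ k, ∫ ω, c k * ∑ j, H ω i j * H ω k j :=
          integral_finset_sum _ (fun k _ =>
            ((integrable_finset_sum _ (fun j _ => hHHint i j k)).const_mul _))
      _ = ∑ k, c k * ∑ j, ∫ ω, H ω i j * H ω k j := by
          refine Finset.sum_congr rfl fun k _ => ?_
          rw [integral_const_mul, integral_finset_sum _ (fun j _ => hHHint i j k)]
      _ = ∑ k, M i k * c k := by
          refine Finset.sum_congr rfl fun k _ => ?_
          rw [hMentry i k]; ring
      _ = (M *ᵥ c) i := rfl
      _ = b i := by
          rw [hc, mulVec_mulVec, Matrix.mul_nonsing_inv M hMinv, one_mulVec]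
  -- key cross-integral identity for any feasible Y
  have cross : ∀ (Y : Ω → Fin d → ℝ), (∀ j, MemLp (fun ω => Y ω j) 2 volume) →
      (∀ i, (∫ ω, (H ω *ᵥ Y ω) i) = b i) →
      (∫ ω, ∑ j, Y ω j * Ys ω j) = c ⬝ᵥ b := by
    intro Y hY hYc
    have hHYint : ∀ i, Integrable (fun ω => ∑ j, H ω i j * Y ω j) volume :=
      fun i => integrable_finset_sum _ (fun j _ => stmt1_l2mul (hH i j) (hY j))
    have hrep : ∀ ω, ∑ j, Y ω j * Ys ω j = ∑ i, c i * ∑ j, H ω i j * Y ω j := by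
      intro ω
      simp only [hYsj, Finset.mul_sum, Finset.sum_mul]
      rw [Finset.sum_comm]
      exact Finset.sum_congr rfl fun i _ => Finset.sum_congr rfl fun j _ => by ring
    calc (∫ ω, ∑ j, Y ω j * Ys ω j)
        = ∫ ω, ∑ i, c i * ∑ j, H ω i j * Y ω j := by simp_rw [hrep]
      _ = ∑ i, ∫ ω, c i * ∑ j, H ω i j * Y ω j :=
          integral_finset_sum _ (fun i _ => (hHYint i).const_mul _)
      _ = ∑ i, c i * b i := by
          refine Finset.sum_congr rfl fun i _ => ?_
          rw [integral_const_mul]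
          congr 1
          have := hYc i
          simpa [mulVec, dotProduct] using this
      _ = c ⬝ᵥ b := rfl
  have hEys : (∫ ω, ∑ j, (Ys ω j) ^ 2) = c ⬝ᵥ b := by
    have := cross Ys hYs hfeas
    simpa [pow_two] using this
  have hcb : c ⬝ᵥ b = b ⬝ᵥ M⁻¹ *ᵥ b := by rw [hc, dotProduct_comm]
  refine ⟨⟨⟨Ys, hYs, hfeas, by rw [hEys, hcb]⟩, ?_⟩, hfeas, by rw [hEys, hcb]⟩
  -- lower bound
  rintro E ⟨Y, hY, hYc, rfl⟩
  have hcross := cross Y hY hYc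
  have hIYY : Integrable (fun ω => ∑ j, Y ω j * Y ω j) volume :=
    integrable_finset_sum _ (fun j _ => stmt1_l2mul (hY j) (hY j))
  have hIYYs : Integrable (fun ω => ∑ j, Y ω j * Ys ω j) volume :=
    integrable_finset_sum _ (fun j _ => stmt1_l2mul (hY j) (hYs j))
  have hIYsYs : Integrable (fun ω => ∑ j, Ys ω j * Ys ω j) volume :=
    integrable_finset_sum _ (fun j _ => stmt1_l2mul (hYs j) (hYs j))
  have hdiff : ∀ ω, ∑ j, (Y ω j - Ys ω j) ^ 2 =
      ∑ j, Y ω j * Y ω j - (2 * ∑ j, Y ω j * Ys ω j - ∑ j, Ys ω j * Ys ω j) := by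
    intro ω
    rw [Finset.mul_sum, ← Finset.sum_sub_distrib, ← Finset.sum_sub_distrib]
    exact Finset.sum_congr rfl fun j _ => by ring
  have hnn : 0 ≤ ∫ ω, ∑ j, (Y ω j - Ys ω j) ^ 2 :=
    integral_nonneg fun ω => Finset.sum_nonneg fun j _ => sq_nonneg _
  have hval : (∫ ω, ∑ j, (Y ω j - Ys ω j) ^ 2) =
      (∫ ω, ∑ j, Y ω j * Y ω j) - c ⬝ᵥ b := by
    calc (∫ ω, ∑ j, (Y ω j - Ys ω j) ^ 2)
        = ∫ ω, (∑ j, Y ω j * Y ω j - (2 * ∑ j, Y ω j * Ys ω j - ∑ j, Ys ω j * Ys ω j)) := by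
          simp_rw [hdiff]
      _ = (∫ ω, ∑ j, Y ω j * Y ω j) -
            ((∫ ω, 2 * ∑ j, Y ω j * Ys ω j) - ∫ ω, ∑ j, Ys ω j * Ys ω j) := by
          have h2 : Integrable (fun ω => 2 * ∑ j, Y ω j * Ys ω j) volume :=
            hIYYs.const_mul 2
          have hg : Integrable
              (fun ω => 2 * ∑ j, Y ω j * Ys ω j - ∑ j, Ys ω j * Ys ω j) volume :=
            h2.sub hIYsYs
          rw [integral_sub hIYY hg, integral_sub h2 hIYsYs]
      _ = (∫ ω, ∑ j, Y ω j * Y ω j) - c ⬝ᵥ b := by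
          rw [integral_const_mul, hcross]
          have : (∫ ω, ∑ j, Ys ω j * Ys ω j) = c ⬝ᵥ b := by
            simpa [pow_two] using hEys
          rw [this]; ring
  have hfinal : c ⬝ᵥ b ≤ ∫ ω, ∑ j, Y ω j * Y ω j := by linarith [hval ▸ hnn]
  calc b ⬝ᵥ M⁻¹ *ᵥ b = c ⬝ᵥ b := hcb.symm
    _ ≤ ∫ ω, ∑ j, Y ω j * Y ω j := hfinal
    _ = ∫ ω, ∑ j, (Y ω j) ^ 2 := by simp_rw [pow_two]
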